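/- Let ρ ∈ [0,1), J a positive integer, and δ_n = 1/(n + J) for all n ∈ ℕ. Define σ₁*(m,k) = ⌈(m + J + 1)(k+1)^{1/(1−ρ)}⌉ − J − 1. Then for all m, k ∈ ℕ, σ₁*(m,k) ≥ m and ∏_{i=m}^{σ₁*(m,k)} (1 − (1−ρ)/(i + J + 1)) ≤ 1/(k+1). -/

import Mathlib

open Finset Real

private lemma tele_prod (J : ℕ) (m : ℕ) : ∀ n, m ≤ n →
    ∏ i ∈ Finset.Icc m n, (((i : ℝ) + J + 1) / ((i : ℝ) + J + 2)) =
      ((m : ℝ) + J + 1) / ((n : ℝ) + J + 2) := by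
  intro n
  induction n with
  | zero =>
    intro hm
    interval_cases m
    simp
  | succ n ih =>
    intro hm
    rcases Nat.lt_or_ge m (n + 1) with h | h
    · have hmn : m ≤ n := Nat.lt_succ_iff.mp h
      rw [Finset.prod_Icc_succ_top hm, ih hmn]
      push_cast
      have h1 : (n : ℝ) + J + 2 ≠ 0 := by positivity
      have h2 : (n : ℝ) + J + 3 ≠ 0 := by positivity
      field_simp
      ring
    · have : m = n + 1 := le_antisymm hm h
      subst this
      simp

theorem stmt_13 (ρ : ℝ) (hρ : 0 ≤ ρ) (hρ1 : ρ < 1) (J : ℕ) (hJ : 1 ≤ J) :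
    ∀ m k : ℕ,
      m ≤ ⌈((m : ℝ) + J + 1) * ((k : ℝ) + 1) ^ ((1 : ℝ) / (1 - ρ))⌉₊ - J - 1 ∧
      ∏ i ∈ Finset.Icc m (⌈((m : ℝ) + J + 1) * ((k : ℝ) + 1) ^ ((1 : ℝ) / (1 - ρ))⌉₊ - J - 1),
        (1 - (1 - ρ) / ((i : ℝ) + J + 1)) ≤ 1 / (k + 1) := by
  intro m k
  set α : ℝ := 1 - ρ with hαdef
  have hα0 : 0 < α := by simp only [hαdef]; linarith
  have hα1 : α ≤ 1 := by simp only [hαdef]; linarith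
  set C : ℝ := ((m : ℝ) + J + 1) * ((k : ℝ) + 1) ^ ((1 : ℝ) / α) with hCdef
  have hk1 : (1 : ℝ) ≤ ((k : ℝ) + 1) ^ ((1 : ℝ) / α) :=
    Real.one_le_rpow (by linarith [Nat.cast_nonneg (α := ℝ) k]) (by positivity)
  have hmJ1 : ((m : ℝ) + J + 1) ≤ C := le_mul_of_one_le_right (by positivity) hk1
  have hceil : m + J + 1 ≤ ⌈C⌉₊ := by
    have h : ((m + J + 1 : ℕ) : ℝ) ≤ (⌈C⌉₊ : ℝ) := by
      push_cast
      exact hmJ1.trans (Nat.le_ceil C)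
    exact_mod_cast h
  set N : ℕ := ⌈C⌉₊ - J - 1 with hNdef
  have hmN : m ≤ N := by omega
  have hNJ : (N : ℝ) + J + 1 = (⌈C⌉₊ : ℝ) := by
    have h : N + J + 1 = ⌈C⌉₊ := by omega
    exact_mod_cast congrArg (Nat.cast : ℕ → ℝ) h
  refine ⟨hmN, ?_⟩
  have hJ1 : (1 : ℝ) ≤ (J : ℝ) := by exact_mod_cast hJ
  -- factorwise bound
  have key : ∏ i ∈ Finset.Icc m N, (1 - α / ((i : ℝ) + J + 1)) ≤
      ∏ i ∈ Finset.Icc m N, (((i : ℝ) + J + 1) / ((i : ℝ) + J + 2)) ^ α := by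
    apply Finset.prod_le_prod
    · intro i _
      have hx1 : (1 : ℝ) ≤ (i : ℝ) + J + 1 := by
        have : (0:ℝ) ≤ (i:ℝ) + J := by positivity
        linarith
      have : α / ((i : ℝ) + J + 1) ≤ 1 := by
        rw [div_le_one (by positivity)]
        linarith
      linarith
    · intro i _
      set x : ℝ := (i : ℝ) + J + 1 with hx
      have hxpos : (0 : ℝ) < x := by positivity
      have hx1 : (1 : ℝ) ≤ x := by
        have : (0:ℝ) ≤ (i:ℝ) + J := by positivity
        simp only [hx]; linarith
      have hb : (1 + 1 / x) ^ α ≤ 1 + α * (1 / x) := by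
        have hs0 : (0 : ℝ) ≤ 1 / x := by positivity
        exact rpow_one_add_le_one_add_mul_self (by linarith) hα0.le hα1
      have hp : (0 : ℝ) < (1 + 1 / x) ^ α := Real.rpow_pos_of_pos (by positivity) _
      have hineq : 1 - α / x ≤ ((1 + 1 / x) ^ α)⁻¹ := by
        rw [inv_eq_one_div, le_div_iff₀ hp]
        have hax : α / x ≤ 1 := by rw [div_le_one hxpos]; linarith
        have h1 : (1 - α / x) * ((1 + 1 / x) ^ α) ≤ (1 - α / x) * (1 + α * (1 / x)) := by
          apply mul_le_mul_of_nonneg_left hb (by linarith)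
        have h2 : (1 - α / x) * (1 + α * (1 / x)) = 1 - (α / x) ^ 2 := by
          field_simp; ring
        nlinarith [sq_nonneg (α / x)]
      have hxx : ((i : ℝ) + J + 1) / ((i : ℝ) + J + 2) = (1 + 1 / x)⁻¹ := by
        have h2 : 1 + 1 / x = (x + 1) / x := by field_simp
        rw [h2, inv_div, hx]
        ring_nf
      rw [hxx, Real.inv_rpow (by positivity)]
      exact hineq
  have hCpos : 0 < C := by
    rw [hCdef]
    positivity
  have hC2 : C ≤ (N : ℝ) + J + 2 := by
    have h := Nat.le_ceil C
    have : (N : ℝ) + J + 2 = (⌈C⌉₊ : ℝ) + 1 := by linarith [hNJ]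
    linarith
  have hfrac : ((m : ℝ) + J + 1) / ((N : ℝ) + J + 2) ≤ (((k : ℝ) + 1) ^ ((1 : ℝ) / α))⁻¹ := by
    have h1 : ((m : ℝ) + J + 1) / ((N : ℝ) + J + 2) ≤ ((m : ℝ) + J + 1) / C :=
      div_le_div_of_nonneg_left (by positivity) hCpos hC2
    have h2 : ((m : ℝ) + J + 1) / C = (((k : ℝ) + 1) ^ ((1 : ℝ) / α))⁻¹ := by
      rw [hCdef]
      have hm0 : ((m : ℝ) + J + 1) ≠ 0 := by positivity
      have ht0 : (((k : ℝ) + 1) ^ ((1 : ℝ) / α)) ≠ 0 := by positivity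
      field_simp
    linarith
  calc ∏ i ∈ Finset.Icc m N, (1 - α / ((i : ℝ) + J + 1))
      ≤ ∏ i ∈ Finset.Icc m N, (((i : ℝ) + J + 1) / ((i : ℝ) + J + 2)) ^ α := key
    _ = (∏ i ∈ Finset.Icc m N, (((i : ℝ) + J + 1) / ((i : ℝ) + J + 2))) ^ α :=
        Real.finset_prod_rpow _ _ (fun i _ => by positivity) α
    _ = (((m : ℝ) + J + 1) / ((N : ℝ) + J + 2)) ^ α := by rw [tele_prod J m N hmN]
    _ ≤ ((((k : ℝ) + 1) ^ ((1 : ℝ) / α))⁻¹) ^ α :=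
        Real.rpow_le_rpow (by positivity) hfrac hα0.le
    _ = 1 / ((k : ℝ) + 1) := by
        rw [Real.inv_rpow (Real.rpow_nonneg (by positivity) _),
          ← Real.rpow_mul (by positivity : (0:ℝ) ≤ (k : ℝ) + 1),
          one_div_mul_cancel hα0.ne', Real.rpow_one, one_div]
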